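/- Clifford torus Ricci identity: for 1 < p < n−1 and μ = √((p−1)/(n−p−1)), the Clifford torus Sᵖ(μ/√(1+μ²)) × S^{n−p}(1/√(1+μ²)) ⊂ S^{n+1}(1) is Einstein with Ric = (n−2)g; i.e. (p−1)(1+μ^{−2}) = (n−p−1)(1+μ²) = n−2. Moreover with H = (pμ^{−1}−(n−p)μ)/n one has the identity 1 + H² = (n−2)((n+2)p(n−p)−n²)/(n²(p−1)(n−p−1)), and hence Ric_min − (n−1 − (n−2)p(n−p)/((n+2)p(n−p)−n²))(1+H²) = 0. -/

import Mathlib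

/-- Clifford torus Ricci identity.  For integers `1 < p < n−1` and
`μ = √((p−1)/(n−p−1))`, the Clifford torus `Sᵖ(μ/√(1+μ²)) × S^{n−p}(1/√(1+μ²))` in
`S^{n+1}(1)` is Einstein with `Ric = (n−2)g`, i.e.
`(p−1)(1+μ⁻²) = (n−p−1)(1+μ²) = n−2`.  Moreover, with `H = (pμ⁻¹−(n−p)μ)/n`,
`1 + H² = (n−2)((n+2)p(n−p)−n²)/(n²(p−1)(n−p−1))`, and hence
`Ric_min − (n−1 − (n−2)p(n−p)/((n+2)p(n−p)−n²))(1+H²) = 0`. -/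
theorem clifford_torus_einstein (n p : ℕ) (hp1 : 1 < p) (hp2 : p < n - 1)
    (μ H : ℝ) (hμ : μ = Real.sqrt (((p : ℝ) - 1) / ((n : ℝ) - p - 1)))
    (hH : H = ((p : ℝ) * μ⁻¹ - ((n : ℝ) - p) * μ) / n) :
    ((p : ℝ) - 1) * (1 + (μ⁻¹) ^ 2) = (n : ℝ) - 2 ∧
      ((n : ℝ) - p - 1) * (1 + μ ^ 2) = (n : ℝ) - 2 ∧
      1 + H ^ 2 =
        ((n : ℝ) - 2) * (((n : ℝ) + 2) * p * ((n : ℝ) - p) - n ^ 2) /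
          ((n : ℝ) ^ 2 * ((p : ℝ) - 1) * ((n : ℝ) - p - 1)) ∧
      ((n : ℝ) - 2) -
          ((n : ℝ) - 1 -
            ((n : ℝ) - 2) * p * ((n : ℝ) - p) /
              (((n : ℝ) + 2) * p * ((n : ℝ) - p) - n ^ 2)) * (1 + H ^ 2) = 0 := by
  have hp2' : p + 2 ≤ n := by omega
  have hP : (2:ℝ) ≤ (p:ℝ) := by exact_mod_cast hp1
  have hN : (p:ℝ) + 2 ≤ (n:ℝ) := by exact_mod_cast hp2'
  have ha : (0:ℝ) < (p:ℝ) - 1 := by linarith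
  have hb : (0:ℝ) < (n:ℝ) - p - 1 := by linarith
  have hNpos : (0:ℝ) < (n:ℝ) := by linarith
  have hμpos : 0 < μ := by rw [hμ]; exact Real.sqrt_pos.mpr (div_pos ha hb)
  have hμ2 : μ ^ 2 = ((p:ℝ) - 1) / ((n:ℝ) - p - 1) := by
    rw [hμ, Real.sq_sqrt (le_of_lt (div_pos ha hb))]
  have hμinv2 : (μ⁻¹) ^ 2 = ((n:ℝ) - p - 1) / ((p:ℝ) - 1) := by
    rw [inv_pow, hμ2, inv_div]
  have hD : (0:ℝ) < ((n:ℝ) + 2) * p * ((n:ℝ) - p) - (n:ℝ) ^ 2 := by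
    nlinarith [mul_nonneg (by linarith : (0:ℝ) ≤ (p:ℝ) - 2) (by linarith : (0:ℝ) ≤ (n:ℝ) - p - 2)]
  have hH2 : H ^ 2 = ((p:ℝ) ^ 2 * (μ⁻¹) ^ 2 - 2 * p * ((n:ℝ) - p) * (μ * μ⁻¹)
      + ((n:ℝ) - p) ^ 2 * μ ^ 2) / (n:ℝ) ^ 2 := by rw [hH]; ring
  rw [mul_inv_cancel₀ hμpos.ne', hμ2, hμinv2] at hH2
  have h3 : 1 + H ^ 2 =
      ((n : ℝ) - 2) * (((n : ℝ) + 2) * p * ((n : ℝ) - p) - n ^ 2) /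
        ((n : ℝ) ^ 2 * ((p : ℝ) - 1) * ((n : ℝ) - p - 1)) := by
    rw [hH2]; field_simp; ring
  refine ⟨?_, ?_, h3, ?_⟩
  · rw [hμinv2]; field_simp; ring
  · rw [hμ2]; field_simp; ring
  · rw [h3]; field_simp [(by linarith : (0:ℝ) < (p:ℝ) * ((n:ℝ) - p) * ((n:ℝ) + 2) - (n:ℝ) ^ 2).ne']; ring
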